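/- Let G be a closed subgroup of SL(2,ℝ) that is not compact, and let L be a finite non-empty subset of the real projective line ℙ¹(ℝ) such that M·L = L for every M ∈ G. Then L has at most 2 elements. -/

import Mathlib

open MeasureTheory Filter

noncomputable section

/-- The group `SL(2,ℝ)`. -/
abbrev SL2 := Matrix.SpecialLinearGroup (Fin 2) ℝ

instance : TopologicalSpace SL2 := instTopologicalSpaceSubtype

/-- The real projective line `ℙ¹(ℝ)`, the projectivization of `ℝ² \ {0}`. -/
abbrev P1 := Projectivization ℝ (EuclideanSpace ℝ (Fin 2))

lemma sl2_inj (M : SL2) :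
    Function.Injective (Matrix.toEuclideanCLM (𝕜 := ℝ) (M : Matrix (Fin 2) (Fin 2) ℝ)) := by
  intro x y h
  have h2 := congrArg (fun v => Matrix.toEuclideanCLM (𝕜 := ℝ)
    ((M⁻¹ : SL2) : Matrix (Fin 2) (Fin 2) ℝ) v) h
  simpa [← ContinuousLinearMap.comp_apply, ← ContinuousLinearMap.mul_def, ← map_mul,
    Matrix.SpecialLinearGroup.coe_inv, Matrix.adjugate_mul, M.prop, one_smul] using h2

/-- The induced action of `M ∈ SL(2,ℝ)` on the real projective line. -/
def projAct (M : SL2) (x : P1) : P1 :=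
  Projectivization.map
    ((Matrix.toEuclideanCLM (𝕜 := ℝ) (M : Matrix (Fin 2) (Fin 2) ℝ)) : _ →ₗ[ℝ] _)
    (sl2_inj M) x

lemma aux_clm_ne_zero (M : SL2) {v : EuclideanSpace ℝ (Fin 2)} (hv : v ≠ 0) :
    Matrix.toEuclideanCLM (𝕜 := ℝ) (M : Matrix (Fin 2) (Fin 2) ℝ) v ≠ 0 := by
  intro h
  exact hv (sl2_inj M (by simpa using h))

lemma projAct_mk (M : SL2) (v : EuclideanSpace ℝ (Fin 2)) (hv : v ≠ 0) :
    projAct M (Projectivization.mk ℝ v hv) =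
      Projectivization.mk ℝ (Matrix.toEuclideanCLM (𝕜 := ℝ) (M : Matrix (Fin 2) (Fin 2) ℝ) v)
        (aux_clm_ne_zero M hv) :=
  Projectivization.map_mk _ _ v hv

lemma projAct_mul (M N : SL2) (x : P1) :
    projAct (M * N) x = projAct M (projAct N x) := by
  induction x using Projectivization.ind with
  | h v hv =>
    rw [projAct_mk, projAct_mk, projAct_mk]
    congr 1
    simp [← ContinuousLinearMap.mul_apply, ← map_mul]

lemma projAct_one (x : P1) : projAct 1 x = x := by
  induction x using Projectivization.ind with
  | h v hv =>
    rw [projAct_mk]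
    congr 1
    simp

lemma projAct_inj (M : SL2) : Function.Injective (projAct M) := by
  intro x y h
  have := congrArg (projAct M⁻¹) h
  rwa [← projAct_mul, ← projAct_mul, inv_mul_cancel, projAct_one, projAct_one] at this

/-- `-1` as an element of `SL(2,ℝ)`. -/
def negOne : SL2 :=
  ⟨-1, by
    rw [show (-1 : Matrix (Fin 2) (Fin 2) ℝ) = (-1 : ℝ) • 1 by simp, Matrix.det_smul]
    norm_num⟩

lemma fix_three (M : SL2) {a b c : P1} (hab : a ≠ b) (hac : a ≠ c) (hbc : b ≠ c)
    (ha : projAct M a = a) (hb : projAct M b = b) (hc : projAct M c = c) :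
    M = 1 ∨ M = negOne := by
  set f := Matrix.toEuclideanCLM (𝕜 := ℝ) (M : Matrix (Fin 2) (Fin 2) ℝ) with hfdef
  set va := a.rep with hvadef; set vb := b.rep with hvbdef; set vc := c.rep with hvcdef
  have hva0 : va ≠ 0 := a.rep_nonzero
  have hvb0 : vb ≠ 0 := b.rep_nonzero
  have hvc0 : vc ≠ 0 := c.rep_nonzero
  -- eigenvalue equations
  have key : ∀ x : P1, projAct M x = x → ∃ α : ℝˣ, f x.rep = (α : ℝ) • x.rep := by
    intro x hx
    rw [← x.mk_rep, projAct_mk, Projectivization.mk_eq_mk_iff] at hx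
    obtain ⟨α, hα⟩ := hx
    exact ⟨α, by rw [← hα]; simp [Units.smul_def]⟩
  obtain ⟨α, hα⟩ := key a ha
  obtain ⟨β, hβ⟩ := key b hb
  obtain ⟨γ, hγ⟩ := key c hc
  -- non-parallel representatives
  have npar : ∀ x y : P1, x ≠ y → ∀ t : ℝ, t • y.rep ≠ x.rep := by
    intro x y hxy t ht
    apply hxy
    rw [← x.mk_rep, ← y.mk_rep, Projectivization.mk_eq_mk_iff']
    exact ⟨t, ht⟩
  -- linear independence of va, vb
  have hli : LinearIndependent ℝ ![va, vb] := by
    rw [LinearIndependent.pair_iff]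
    intro s t hst
    by_cases hs : s = 0
    · subst hs
      simp only [zero_smul, zero_add, smul_eq_zero] at hst
      exact ⟨rfl, hst.resolve_right hvb0⟩
    · exfalso
      apply npar a b hab (-(s⁻¹ * t))
      have h1 := congrArg (fun w => s⁻¹ • w) hst
      simp only [smul_add, smul_smul, inv_mul_cancel₀ hs, one_smul, smul_zero] at h1
      rw [neg_smul, neg_eq_iff_add_eq_zero, mul_smul, add_comm]
      rw [mul_smul] at h1
      exact h1
  have hcard : Fintype.card (Fin 2) = Module.finrank ℝ (EuclideanSpace ℝ (Fin 2)) := by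
    simp [finrank_euclideanSpace_fin]
  let B : Module.Basis (Fin 2) ℝ (EuclideanSpace ℝ (Fin 2)) :=
    basisOfLinearIndependentOfCardEqFinrank hli hcard
  have hB : ⇑B = ![va, vb] := coe_basisOfLinearIndependentOfCardEqFinrank hli hcard
  have hB0 : B 0 = va := by rw [hB]; rfl
  have hB1 : B 1 = vb := by rw [hB]; rfl
  set s := B.repr vc 0 with hsdef
  set t := B.repr vc 1 with htdef
  have hrepr : s • va + t • vb = vc := by
    have := B.sum_repr vc
    rwa [Fin.sum_univ_two, hB0, hB1] at this
  have hsne : s ≠ 0 := by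
    intro h0
    rw [h0, zero_smul, zero_add] at hrepr
    exact npar c b hbc.symm t hrepr
  have htne : t ≠ 0 := by
    intro h0
    rw [h0, zero_smul, add_zero] at hrepr
    exact npar c a hac.symm s hrepr
  -- apply f to hrepr, compare coefficients
  have happ : (s * (α : ℝ)) • va + (t * (β : ℝ)) • vb = (γ : ℝ) • vc := by
    have h2 := congrArg f hrepr
    rw [map_add, f.map_smul, f.map_smul, hα, hβ, hγ] at h2
    rw [mul_smul, mul_smul]
    exact h2
  have hγc : (γ : ℝ) • vc = (s * (γ : ℝ)) • va + (t * (γ : ℝ)) • vb := by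
    rw [← hrepr, smul_add, smul_smul, smul_smul, mul_comm (γ : ℝ) s, mul_comm (γ : ℝ) t]
  have h2 : (s * (α : ℝ) - s * (γ : ℝ)) • va + (t * (β : ℝ) - t * (γ : ℝ)) • vb = 0 := by
    rw [sub_smul, sub_smul]
    rw [hγc] at happ
    rw [← sub_eq_zero] at happ
    rw [← happ]
    abel
  obtain ⟨h3, h4⟩ := LinearIndependent.pair_iff.1 hli _ _ h2
  have hαγ : (α : ℝ) = (γ : ℝ) := by
    have := sub_eq_zero.1 h3
    exact mul_left_cancel₀ hsne this
  have hβγ : (β : ℝ) = (γ : ℝ) := by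
    have := sub_eq_zero.1 h4
    exact mul_left_cancel₀ htne this
  -- f is scalar multiplication by α
  have hflin : (f : EuclideanSpace ℝ (Fin 2) →ₗ[ℝ] EuclideanSpace ℝ (Fin 2)) =
      (α : ℝ) • LinearMap.id := by
    apply B.ext
    intro i
    fin_cases i
    · simpa [hB0] using hα
    · simpa [hB1, hβγ, ← hαγ] using hβ
  have hfv : ∀ v, f v = (α : ℝ) • v := by
    intro v
    have := congrArg (fun g => g v) hflin
    simpa using this
  -- identify the matrix
  have hMmat : (M : Matrix (Fin 2) (Fin 2) ℝ) = (α : ℝ) • 1 := by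
    apply (Matrix.toEuclideanCLM (𝕜 := ℝ) (n := Fin 2)).injective
    apply ContinuousLinearMap.ext
    intro v
    show (Matrix.toEuclideanCLM (𝕜 := ℝ) ((M : Matrix (Fin 2) (Fin 2) ℝ))) v =
      (Matrix.toEuclideanCLM (𝕜 := ℝ) ((α : ℝ) • (1 : Matrix (Fin 2) (Fin 2) ℝ))) v
    rw [← hfdef, hfv v, _root_.map_smul, map_one]
    simp
  -- determinant
  have hdet : (α : ℝ) * (α : ℝ) = 1 := by
    have h5 := M.prop
    rw [hMmat, Matrix.smul_one_eq_diagonal] at h5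
    simpa [Matrix.det_diagonal, sq] using h5
  rcases mul_self_eq_one_iff.1 hdet with h6 | h6
  · left
    apply Subtype.ext
    show (M : Matrix (Fin 2) (Fin 2) ℝ) = (1 : Matrix (Fin 2) (Fin 2) ℝ)
    rw [hMmat, h6, one_smul]
  · right
    apply Subtype.ext
    show (M : Matrix (Fin 2) (Fin 2) ℝ) = (-1 : Matrix (Fin 2) (Fin 2) ℝ)
    rw [hMmat, h6]
    simp

/-- A finite non-empty subset of `ℙ¹(ℝ)` invariant under a non-compact closed subgroup of
`SL(2,ℝ)` has at most two elements. -/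
theorem invariant_set_card_le_two
    (G : Subgroup SL2)
    (hclosed : IsClosed (G : Set SL2))
    (hnc : ¬ IsCompact (G : Set SL2))
    (L : Set P1) (hfin : L.Finite) (hne : L.Nonempty)
    (hinv : ∀ M ∈ G, projAct M '' L = L) :
    L.ncard ≤ 2 := by
  by_contra h
  push_neg at h
  obtain ⟨a, haL, b, hbL, c, hcL, hab, hac, hbc⟩ := (Set.two_lt_ncard hfin).1 h
  apply hnc
  suffices hGfin : (G : Set SL2).Finite from hGfin.isCompact
  have hmem : ∀ M ∈ G, ∀ x ∈ L, projAct M x ∈ L := by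
    intro M hM x hx
    rw [← hinv M hM]
    exact Set.mem_image_of_mem _ hx
  have hsub : (G : Set SL2) ⊆
      ⋃ p ∈ (L ×ˢ (L ×ˢ L)), {M : SL2 | M ∈ G ∧ projAct M a = p.1 ∧
        projAct M b = p.2.1 ∧ projAct M c = p.2.2} := by
    intro M hM
    simp only [Set.mem_iUnion, Set.mem_setOf_eq]
    exact ⟨(projAct M a, projAct M b, projAct M c),
      ⟨hmem M hM a haL, hmem M hM b hbL, hmem M hM c hcL⟩, hM, rfl, rfl, rfl⟩
  apply Set.Finite.subset _ hsub
  apply Set.Finite.biUnion (hfin.prod (hfin.prod hfin))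
  intro p _
  set S := {M : SL2 | M ∈ G ∧ projAct M a = p.1 ∧ projAct M b = p.2.1 ∧ projAct M c = p.2.2}
    with hSdef
  rcases Set.eq_empty_or_nonempty S with hS | ⟨M₀, hM₀⟩
  · rw [hS]; exact Set.finite_empty
  · apply Set.Finite.subset ((Set.finite_singleton (M₀ * negOne)).insert M₀)
    intro M hMS
    have fix : ∀ x : P1, projAct M₀ x = projAct M x → projAct (M₀⁻¹ * M) x = x := by
      intro x hx
      apply projAct_inj M₀
      rw [← projAct_mul, ← mul_assoc, mul_inv_cancel, one_mul, hx]
    have fa := fix a (hM₀.2.1.trans hMS.2.1.symm)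
    have fb := fix b (hM₀.2.2.1.trans hMS.2.2.1.symm)
    have fc := fix c (hM₀.2.2.2.trans hMS.2.2.2.symm)
    rcases fix_three (M₀⁻¹ * M) hab hac hbc fa fb fc with h1 | h1
    · exact Set.mem_insert_iff.2 (Or.inl (inv_mul_eq_one.1 h1).symm)
    · refine Set.mem_insert_iff.2 (Or.inr ?_)
      simp only [Set.mem_singleton_iff]
      rw [← h1, ← mul_assoc, mul_inv_cancel, one_mul]
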